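/- For every k ≥ 1, every signed graph (G,σ) with ψ(G,σ) = k contains an induced signed subgraph (H,σ) with ψ(H,σ) = k and |V(H)| ≤ (k+1)². (In particular, there is a polynomial function f(k) such that every signed graph with achromatic number k has an induced signed subgraph with achromatic number k and size at most f(k).) -/

import Mathlib

open SimpleGraph

/-- A signature on a graph: a symmetric assignment of signs (`1` or `-1`) to pairs of
vertices (only the values on edges are relevant). -/
def IsSignature {V : Type*} (σ : V → V → ℤ) : Prop :=
  (∀ u v, σ u v = σ v u) ∧ (∀ u v, σ u v = 1 ∨ σ u v = -1)

/-- `σ'` is obtained from `σ` by switching a set of vertices: every vertex gets a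
switching value `±1`, and the sign of an edge is multiplied by the values at its ends. -/
def SwitchEquiv {V : Type*} (σ σ' : V → V → ℤ) : Prop :=
  ∃ s : V → ℤ, (∀ v, s v = 1 ∨ s v = -1) ∧ ∀ u v, σ' u v = s u * s v * σ u v

/-- The colour set `M_k`, as a set of integers: `{±1, …, ±n}` if `k = 2n`, and
`{-n, …, -1, 0, 1, …, n}` if `k = 2n+1` (colour `±0` is represented by `0`). -/
def colourSet (k : ℕ) : Set ℤ :=
  if Even k then {i | i ≠ 0 ∧ i.natAbs ≤ k / 2} else {i | i.natAbs ≤ k / 2}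

/-- A proper `k`-colouring of the signed graph `(G, σ)`: colours come from `M_k` and,
for each edge `uv`, `φ u ≠ σ(uv) · φ v`. -/
def IsProperColouring {V : Type*} (G : SimpleGraph V) (σ : V → V → ℤ) (k : ℕ)
    (φ : V → ℤ) : Prop :=
  (∀ v, φ v ∈ colourSet k) ∧ ∀ u v, G.Adj u v → φ u ≠ σ u v * φ v

/-- The sign of an integer for the purpose of switching: `-1` for negative colours,
`1` otherwise. -/
def isgn (x : ℤ) : ℤ := if x < 0 then -1 else 1

/-- The sign of the edge `uv` after switching every vertex whose colour is negative. -/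
def redSign {V : Type*} (σ : V → V → ℤ) (φ : V → ℤ) (u v : V) : ℤ :=
  isgn (φ u) * isgn (φ v) * σ u v

/-- After switching all negatively-coloured vertices and taking absolute values of
colours, there is an edge of `(G, σ)` whose ends get values `i` and `j` and whose
resulting sign is `s`. -/
def HasEdgeType {V : Type*} (G : SimpleGraph V) (σ : V → V → ℤ) (φ : V → ℤ)
    (i j : ℕ) (s : ℤ) : Prop :=
  ∃ u v, G.Adj u v ∧ (φ u).natAbs = i ∧ (φ v).natAbs = j ∧ redSign σ φ u v = s

/-- A complete `k`-colouring of the signed graph `(G, σ)`. -/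
def IsCompleteColouring {V : Type*} (G : SimpleGraph V) (σ : V → V → ℤ) (k : ℕ)
    (φ : V → ℤ) : Prop :=
  IsProperColouring G σ k φ ∧
  (∀ i j : ℕ, (i : ℤ) ∈ colourSet k → (j : ℤ) ∈ colourSet k → i ≠ j →
    HasEdgeType G σ φ i j 1 ∧ HasEdgeType G σ φ i j (-1)) ∧
  (∀ i : ℕ, 1 ≤ i → (i : ℤ) ∈ colourSet k → HasEdgeType G σ φ i i (-1))

/-- Some signed graph equivalent to `(G, σ)` admits a complete `k`-colouring. -/
def AdmitsComplete {V : Type*} (G : SimpleGraph V) (σ : V → V → ℤ) (k : ℕ) : Prop :=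
  ∃ σ', IsSignature σ' ∧ SwitchEquiv σ σ' ∧ ∃ φ, IsCompleteColouring G σ' k φ

/-- The achromatic number of the signed graph `(G, σ)`: the largest `k` such that some
signed graph equivalent to `(G, σ)` admits a complete `k`-colouring. -/
noncomputable def psi {V : Type*} (G : SimpleGraph V) (σ : V → V → ℤ) : ℕ :=
  sSup {k | AdmitsComplete G σ k}

/-- The chromatic number of the signed graph `(G, σ)`: the smallest `k` such that
`(G, σ)` admits a proper `k`-colouring. -/
noncomputable def chi {V : Type*} (G : SimpleGraph V) (σ : V → V → ℤ) : ℕ :=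
  sInf {k | ∃ φ, IsProperColouring G σ k φ}

-- ==================== auxiliary development ====================
namespace S15

variable {V : Type*}

lemma mem_colourSet_even {k : ℕ} (h : Even k) {x : ℤ} :
    x ∈ colourSet k ↔ x ≠ 0 ∧ x.natAbs ≤ k / 2 := by
  simp [colourSet, h, Set.mem_setOf_eq]

lemma mem_colourSet_odd {k : ℕ} (h : ¬ Even k) {x : ℤ} :
    x ∈ colourSet k ↔ x.natAbs ≤ k / 2 := by
  simp [colourSet, h, Set.mem_setOf_eq]

lemma natAbs_le_of_mem {k : ℕ} {x : ℤ} (h : x ∈ colourSet k) : x.natAbs ≤ k / 2 := by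
  by_cases he : Even k
  · exact ((mem_colourSet_even he).1 h).2
  · exact (mem_colourSet_odd he).1 h

lemma sign_sq {a : ℤ} (h : a = 1 ∨ a = -1) : a * a = 1 := by rcases h with h | h <;> simp [h]

lemma natAbs_sign_mul {a : ℤ} (h : a = 1 ∨ a = -1) (x : ℤ) :
    (a * x).natAbs = x.natAbs := by rcases h with h | h <;> simp [h]

lemma isgn_eq (x : ℤ) : isgn x = 1 ∨ isgn x = -1 := by
  unfold isgn; split <;> simp

lemma isgn_of_nonneg {x : ℤ} (h : 0 ≤ x) : isgn x = 1 := by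
  simp [isgn, not_lt.2 h]

lemma isgn_mul_sign_pos {a x : ℤ} (ha : a = 1 ∨ a = -1) (h : 0 < a * x) :
    isgn x * a = 1 := by
  rcases ha with ha | ha <;> subst ha <;> simp_all [isgn] <;> omega

lemma isgn_mul_sign_neg {a x : ℤ} (ha : a = 1 ∨ a = -1) (h : a * x < 0) :
    isgn x * a = -1 := by
  rcases ha with ha | ha <;> subst ha <;> simp_all [isgn] <;> omega

def HasEdgeTypeOn (G : SimpleGraph V) (σ : V → V → ℤ) (φ : V → ℤ) (S : Set V)
    (i j : ℕ) (s : ℤ) : Prop :=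
  ∃ u ∈ S, ∃ v ∈ S, G.Adj u v ∧ (φ u).natAbs = i ∧ (φ v).natAbs = j ∧ redSign σ φ u v = s

def CompleteOn (G : SimpleGraph V) (σ : V → V → ℤ) (k : ℕ) (S : Set V) (φ : V → ℤ) : Prop :=
  (∀ v ∈ S, φ v ∈ colourSet k) ∧
  (∀ u ∈ S, ∀ v ∈ S, G.Adj u v → φ u ≠ σ u v * φ v) ∧
  (∀ i j : ℕ, (i : ℤ) ∈ colourSet k → (j : ℤ) ∈ colourSet k → i ≠ j →
    HasEdgeTypeOn G σ φ S i j 1 ∧ HasEdgeTypeOn G σ φ S i j (-1)) ∧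
  (∀ i : ℕ, 1 ≤ i → (i : ℤ) ∈ colourSet k → HasEdgeTypeOn G σ φ S i i (-1))

lemma HasEdgeTypeOn.transfer {G : SimpleGraph V} {σ φ φ' : _} {S S' : Set V} {i j : ℕ} {s : ℤ}
    (hS : S ⊆ S') (hφ : ∀ x ∈ S, φ x ≠ 0 → φ' x = φ x) (hi : 1 ≤ i) (hj : 1 ≤ j)
    (h : HasEdgeTypeOn G σ φ S i j s) : HasEdgeTypeOn G σ φ' S' i j s := by
  obtain ⟨u, hu, v, hv, hadj, hiu, hjv, hr⟩ := h
  have hu0 : φ u ≠ 0 := fun h0 => by simp [h0] at hiu; omega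
  have hv0 : φ v ≠ 0 := fun h0 => by simp [h0] at hjv; omega
  have e1 : φ' u = φ u := hφ u hu hu0
  have e2 : φ' v = φ v := hφ v hv hv0
  exact ⟨u, hS hu, v, hS hv, hadj, by rw [e1]; exact hiu, by rw [e2]; exact hjv,
    by unfold redSign at hr ⊢; rw [e1, e2]; exact hr⟩

lemma HasEdgeTypeOn.transfer_all {G : SimpleGraph V} {σ φ φ' : _} {S S' : Set V} {i j : ℕ} {s : ℤ}
    (hS : S ⊆ S') (hφ : ∀ x ∈ S, φ' x = φ x)
    (h : HasEdgeTypeOn G σ φ S i j s) : HasEdgeTypeOn G σ φ' S' i j s := by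
  obtain ⟨u, hu, v, hv, hadj, hiu, hjv, hr⟩ := h
  have e1 : φ' u = φ u := hφ u hu
  have e2 : φ' v = φ v := hφ v hv
  exact ⟨u, hS hu, v, hS hv, hadj, by rw [e1]; exact hiu, by rw [e2]; exact hjv,
    by unfold redSign at hr ⊢; rw [e1, e2]; exact hr⟩

lemma HasEdgeTypeOn.symm {G : SimpleGraph V} {σ : V → V → ℤ} {φ : V → ℤ} {S : Set V}
    {i j : ℕ} {s : ℤ} (hσ : ∀ u v, σ u v = σ v u)
    (h : HasEdgeTypeOn G σ φ S i j s) : HasEdgeTypeOn G σ φ S j i s := by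
  obtain ⟨u, hu, v, hv, hadj, hiu, hjv, hr⟩ := h
  refine ⟨v, hv, u, hu, hadj.symm, hjv, hiu, ?_⟩
  unfold redSign at hr ⊢
  rw [hσ v u]; rw [show isgn (φ v) * isgn (φ u) = isgn (φ u) * isgn (φ v) by ring]
  exact hr

end S15

namespace S15
variable {V : Type*}

lemma ne_of_natAbs_ne {a b : ℤ} (h : a.natAbs ≠ b.natAbs) : a ≠ b := fun e => h (e ▸ rfl)

lemma extend_step {G : SimpleGraph V} {σ' : V → V → ℤ} (hσ' : IsSignature σ')
    {k : ℕ} {S : Set V} {φ : V → ℤ} {v : V} (hv : v ∉ S)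
    (h : CompleteOn G σ' k S φ) :
    ∃ k' φ', k ≤ k' ∧ CompleteOn G σ' k' (insert v S) φ' := by
  classical
  obtain ⟨hcol, hprop, hpair, hloop⟩ := h
  obtain ⟨hsymm, hval⟩ := hσ'
  have hSsub : S ⊆ insert v S := Set.subset_insert v S
  have hnev : ∀ x ∈ S, x ≠ v := fun x hx e => hv (by rwa [e] at hx)
  by_cases hfree : ∃ c ∈ colourSet k, ∀ u ∈ S, G.Adj v u → σ' v u * φ u ≠ c
  · -- Case A : a free colour exists, extend with the same k
    obtain ⟨c, hc, hcf⟩ := hfree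
    set φ' := Function.update φ v c with hφ'
    have heq : ∀ x ∈ S, φ' x = φ x := fun x hx => Function.update_of_ne (hnev x hx) _ _
    refine ⟨k, φ', le_refl _, ?_, ?_, ?_, ?_⟩
    · intro x hx
      rcases Set.mem_insert_iff.1 hx with rfl | hx
      · simpa [hφ'] using hc
      · rw [heq x hx]; exact hcol x hx
    · intro u hu w hw hadj
      rcases Set.mem_insert_iff.1 hu with hu' | hu' <;>
        rcases Set.mem_insert_iff.1 hw with hw' | hw'
      · subst hu'; subst hw'; exact absurd hadj (SimpleGraph.irrefl G)
      · subst hu'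
        rw [heq w hw', show φ' u = c from Function.update_self _ _ _]
        exact fun hh => hcf w hw' hadj hh.symm
      · subst hw'
        rw [heq u hu', show φ' w = c from Function.update_self _ _ _]
        intro hh
        apply hcf u hu' hadj.symm
        rw [hsymm w u, hh, ← mul_assoc, sign_sq (hval u w), one_mul]
      · rw [heq u hu', heq w hw']; exact hprop u hu' w hw' hadj
    · intro i j hi hj hne
      exact ⟨(hpair i j hi hj hne).1.transfer_all hSsub heq,
        (hpair i j hi hj hne).2.transfer_all hSsub heq⟩
    · intro i h1 hi
      exact (hloop i h1 hi).transfer_all hSsub heq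
  · push_neg at hfree
    -- every colour of M_k is forbidden at v
    rcases Nat.even_or_odd k with hke | hko
    · -- Case B : k even, give v the colour 0, pass to k+1
      have hkodd : ¬ Even (k + 1) := by simp [Nat.even_add_one, hke]
      have hhalf : (k + 1) / 2 = k / 2 := by obtain ⟨m, hm⟩ := hke; omega
      set φ' := Function.update φ v 0 with hφ'
      have heq : ∀ x ∈ S, φ' x = φ x := fun x hx => Function.update_of_ne (hnev x hx) _ _
      have hne0 : ∀ x ∈ S, φ x ≠ 0 := fun x hx => ((mem_colourSet_even hke).1 (hcol x hx)).1
      have key0 : ∀ j : ℕ, 1 ≤ j → j ≤ k / 2 →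
          HasEdgeTypeOn G σ' φ' (insert v S) 0 j 1 ∧
          HasEdgeTypeOn G σ' φ' (insert v S) 0 j (-1) := by
        intro j h1 h2
        constructor
        · obtain ⟨u, hu, hadj, he⟩ := hfree (j : ℤ)
            ((mem_colourSet_even hke).2 ⟨by exact_mod_cast (by omega : j ≠ 0), by simpa⟩)
          refine ⟨v, Set.mem_insert v S, u, hSsub hu, hadj, by simp [hφ'], ?_, ?_⟩
          · rw [heq u hu, ← natAbs_sign_mul (hval v u) (φ u), he]; simp
          · unfold redSign
            rw [heq u hu, show φ' v = 0 from Function.update_self _ _ _,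
              isgn_of_nonneg le_rfl, one_mul]
            exact isgn_mul_sign_pos (hval v u) (by rw [he]; exact_mod_cast h1)
        · obtain ⟨u, hu, hadj, he⟩ := hfree (-(j : ℤ))
            ((mem_colourSet_even hke).2 ⟨by simpa using (by omega : j ≠ 0), by simpa⟩)
          refine ⟨v, Set.mem_insert v S, u, hSsub hu, hadj, by simp [hφ'], ?_, ?_⟩
          · rw [heq u hu, ← natAbs_sign_mul (hval v u) (φ u), he]; simp
          · unfold redSign
            rw [heq u hu, show φ' v = 0 from Function.update_self _ _ _,
              isgn_of_nonneg le_rfl, one_mul]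
            refine isgn_mul_sign_neg (hval v u) (by
              rw [he]
              have : (0:ℤ) < (j:ℤ) := by exact_mod_cast h1
              omega)
      refine ⟨k + 1, φ', Nat.le_succ _, ?_, ?_, ?_, ?_⟩
      · intro x hx
        rcases Set.mem_insert_iff.1 hx with rfl | hx
        · rw [show φ' x = 0 from Function.update_self _ _ _]
          exact (mem_colourSet_odd hkodd).2 (by simp)
        · rw [heq x hx]
          exact (mem_colourSet_odd hkodd).2
            (by rw [hhalf]; exact ((mem_colourSet_even hke).1 (hcol x hx)).2)
      · intro u hu w hw hadj
        rcases Set.mem_insert_iff.1 hu with hu' | hu' <;>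
          rcases Set.mem_insert_iff.1 hw with hw' | hw'
        · subst hu'; subst hw'; exact absurd hadj (SimpleGraph.irrefl G)
        · subst hu'
          rw [heq w hw', show φ' u = 0 from Function.update_self _ _ _]
          intro hh
          rcases hval u w with e | e <;> rw [e] at hh <;> simp at hh <;>
            first
              | exact hne0 w hw' hh.symm
              | exact hne0 w hw' hh
        · subst hw'
          rw [heq u hu', show φ' w = 0 from Function.update_self _ _ _]
          simpa using hne0 u hu'
        · rw [heq u hu', heq w hw']; exact hprop u hu' w hw' hadj
      · intro i j hi hj hne
        have hi' := (mem_colourSet_odd hkodd).1 hi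
        have hj' := (mem_colourSet_odd hkodd).1 hj
        simp only [Int.natAbs_natCast, hhalf] at hi' hj'
        rcases Nat.eq_zero_or_pos i with rfl | hipos
        · exact key0 j (by omega) hj'
        · rcases Nat.eq_zero_or_pos j with rfl | hjpos
          · have := key0 i (by omega) hi'
            exact ⟨(this.1).symm hsymm, (this.2).symm hsymm⟩
          · have hik : (i : ℤ) ∈ colourSet k :=
              (mem_colourSet_even hke).2 ⟨by exact_mod_cast (by omega : i ≠ 0), by simpa⟩
            have hjk : (j : ℤ) ∈ colourSet k :=
              (mem_colourSet_even hke).2 ⟨by exact_mod_cast (by omega : j ≠ 0), by simpa⟩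
            exact ⟨(hpair i j hik hjk hne).1.transfer_all hSsub heq,
              (hpair i j hik hjk hne).2.transfer_all hSsub heq⟩
      · intro i h1 hi
        have hi' := (mem_colourSet_odd hkodd).1 hi
        simp only [Int.natAbs_natCast, hhalf] at hi'
        have hik : (i : ℤ) ∈ colourSet k :=
          (mem_colourSet_even hke).2 ⟨by exact_mod_cast (by omega : i ≠ 0), by simpa⟩
        exact (hloop i h1 hik).transfer_all hSsub heq
    · -- Case C : k odd
      obtain ⟨n, hn⟩ := hko
      have hkh : k / 2 = n := by omega
      have hnek : ¬ Even k := by rw [Nat.even_iff]; omega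
      have hkeven : Even (k + 1) := ⟨n + 1, by omega⟩
      have hhalf : (k + 1) / 2 = n + 1 := by omega
      set N : ℤ := (n : ℤ) + 1 with hNdef
      have hNpos : (0:ℤ) < N := by positivity
      have hNabs : N.natAbs = n + 1 := by
        rw [show N = ((n + 1 : ℕ) : ℤ) by push_cast [hNdef]; ring]
        exact Int.natAbs_natCast _
      set t : V → ℤ := fun x => if G.Adj x v then -σ' x v else 1 with htdef
      have htval : ∀ x, t x = 1 ∨ t x = -1 := by
        intro x
        by_cases hx : G.Adj x v
        · simp only [htdef, if_pos hx]
          rcases hval x v with e | e <;> rw [e] <;> simp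
        · simp [htdef, hx]
      set φ' : V → ℤ := fun x => if x = v then N else if φ x = 0 then t x * N else φ x
        with hφ'def
      have hφ'v : φ' v = N := by simp [hφ'def]
      have hφ'pos : ∀ x ∈ S, φ x ≠ 0 → φ' x = φ x := by
        intro x hx h0; simp [hφ'def, hnev x hx, h0]
      have hφ'zero : ∀ x ∈ S, φ x = 0 → φ' x = t x * N := by
        intro x hx h0; simp [hφ'def, hnev x hx, h0]
      have habs : ∀ x ∈ S, (φ x).natAbs ≤ n := by
        intro x hx
        have := natAbs_le_of_mem (hcol x hx); rwa [hkh] at this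
      have habs' : ∀ x ∈ S, φ x ≠ 0 → (φ' x).natAbs ≤ n := by
        intro x hx h0; rw [hφ'pos x hx h0]; exact habs x hx
      have habsz : ∀ x ∈ S, φ x = 0 → (φ' x).natAbs = n + 1 := by
        intro x hx h0
        rw [hφ'zero x hx h0, natAbs_sign_mul (htval x), hNabs]
      -- key : edges from v realise both signs towards every value 1 ≤ j ≤ n
      have key : ∀ j : ℕ, 1 ≤ j → j ≤ n →
          HasEdgeTypeOn G σ' φ' (insert v S) (n + 1) j 1 ∧
          HasEdgeTypeOn G σ' φ' (insert v S) (n + 1) j (-1) := by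
        intro j h1 h2
        constructor
        · obtain ⟨u, hu, hadj, he⟩ := hfree (j : ℤ)
            ((mem_colourSet_odd hnek).2 (by simp; omega))
          have hu0 : φ u ≠ 0 := by
            intro h0; rw [h0, mul_zero] at he
            have : (0:ℤ) < (j:ℤ) := by exact_mod_cast h1
            omega
          refine ⟨v, Set.mem_insert v S, u, hSsub hu, hadj, by rw [hφ'v, hNabs], ?_, ?_⟩
          · rw [hφ'pos u hu hu0, ← natAbs_sign_mul (hval v u) (φ u), he]; simp
          · unfold redSign
            rw [hφ'pos u hu hu0, hφ'v, isgn_of_nonneg hNpos.le, one_mul]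
            exact isgn_mul_sign_pos (hval v u) (by rw [he]; exact_mod_cast h1)
        · obtain ⟨u, hu, hadj, he⟩ := hfree (-(j : ℤ))
            ((mem_colourSet_odd hnek).2 (by simp; omega))
          have hu0 : φ u ≠ 0 := by
            intro h0; rw [h0, mul_zero] at he
            have : (0:ℤ) < (j:ℤ) := by exact_mod_cast h1
            omega
          refine ⟨v, Set.mem_insert v S, u, hSsub hu, hadj, by rw [hφ'v, hNabs], ?_, ?_⟩
          · rw [hφ'pos u hu hu0, ← natAbs_sign_mul (hval v u) (φ u), he]; simp
          · unfold redSign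
            rw [hφ'pos u hu hu0, hφ'v, isgn_of_nonneg hNpos.le, one_mul]
            refine isgn_mul_sign_neg (hval v u) (by
              rw [he]
              have : (0:ℤ) < (j:ℤ) := by exact_mod_cast h1
              omega)
      -- keyloop : a negative edge between two vertices of value n+1
      have keyloop : HasEdgeTypeOn G σ' φ' (insert v S) (n + 1) (n + 1) (-1) := by
        obtain ⟨u, hu, hadj, he⟩ := hfree (0 : ℤ)
          ((mem_colourSet_odd hnek).2 (by simp))
        have hu0 : φ u = 0 := by rcases hval v u with e | e <;> rw [e] at he <;> omega
        refine ⟨v, Set.mem_insert v S, u, hSsub hu, hadj, by rw [hφ'v, hNabs],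
          habsz u hu hu0, ?_⟩
        unfold redSign
        rw [hφ'v, hφ'zero u hu hu0, isgn_of_nonneg hNpos.le, one_mul]
        have htu : t u = -σ' u v := by simp [htdef, hadj.symm]
        rw [htu, hsymm v u]
        rcases hval u v with e | e <;> rw [e] <;> simp [isgn, hNpos, lt_asymm hNpos, hNpos.le]
      refine ⟨k + 1, φ', Nat.le_succ _, ?_, ?_, ?_, ?_⟩
      · -- colours
        intro x hx
        rcases Set.mem_insert_iff.1 hx with rfl | hx
        · rw [hφ'v]
          exact (mem_colourSet_even hkeven).2 ⟨by omega, by rw [hNabs, hhalf]⟩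
        · by_cases h0 : φ x = 0
          · rw [hφ'zero x hx h0]
            refine (mem_colourSet_even hkeven).2 ⟨?_, by rw [natAbs_sign_mul (htval x), hNabs, hhalf]⟩
            rcases htval x with e | e <;> rw [e] <;> omega
          · rw [hφ'pos x hx h0]
            exact (mem_colourSet_even hkeven).2 ⟨h0, by rw [hhalf]; exact (habs x hx).trans (by omega)⟩
      · -- properness
        intro u hu w hw hadj
        rcases Set.mem_insert_iff.1 hu with hu' | hu' <;>
          rcases Set.mem_insert_iff.1 hw with hw' | hw'
        · subst hu'; subst hw'; exact absurd hadj (SimpleGraph.irrefl G)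
        · -- u = v, w ∈ S
          subst hu'
          by_cases h0 : φ w = 0
          · rw [hφ'v, hφ'zero w hw' h0]
            have htw : t w = -σ' w u := by simp only [htdef]; rw [if_pos hadj.symm]
            rw [htw, hsymm w u]
            rcases hval u w with e | e <;> rw [e] <;> intro hh <;> omega
          · rw [hφ'v, hφ'pos w hw' h0]
            apply ne_of_natAbs_ne
            rw [hNabs, natAbs_sign_mul (hval u w)]
            have := habs w hw'; omega
        · -- u ∈ S, w = v
          subst hw'
          by_cases h0 : φ u = 0
          · rw [hφ'v, hφ'zero u hu' h0]
            have htu : t u = -σ' u w := by simp only [htdef]; rw [if_pos hadj]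
            rw [htu]
            rcases hval u w with e | e <;> rw [e] <;> intro hh <;> omega
          · rw [hφ'v, hφ'pos u hu' h0]
            apply ne_of_natAbs_ne
            rw [natAbs_sign_mul (hval u w), hNabs]
            have := habs u hu'; omega
        · -- both in S
          by_cases h0u : φ u = 0 <;> by_cases h0w : φ w = 0
          · exfalso
            have := hprop u hu' w hw' hadj
            rw [h0u, h0w, mul_zero] at this
            exact this rfl
          · rw [hφ'zero u hu' h0u, hφ'pos w hw' h0w]
            apply ne_of_natAbs_ne
            rw [natAbs_sign_mul (htval u), hNabs, natAbs_sign_mul (hval u w)]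
            have := habs w hw'; omega
          · rw [hφ'pos u hu' h0u, hφ'zero w hw' h0w]
            apply ne_of_natAbs_ne
            rw [show σ' u w * (t w * N) = (σ' u w * t w) * N by ring,
              natAbs_sign_mul (by rcases hval u w with e | e <;> rcases htval w with f | f <;>
                rw [e, f] <;> simp : σ' u w * t w = 1 ∨ σ' u w * t w = -1), hNabs]
            have := habs u hu'; omega
          · rw [hφ'pos u hu' h0u, hφ'pos w hw' h0w]
            exact hprop u hu' w hw' hadj
      · -- pairs
        intro i j hi hj hne
        have hi' := (mem_colourSet_even hkeven).1 hi
        have hj' := (mem_colourSet_even hkeven).1 hj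
        have hi1 : 1 ≤ i := by
          rcases Nat.eq_zero_or_pos i with rfl | h
          · exact absurd rfl (by exact_mod_cast hi'.1)
          · exact h
        have hj1 : 1 ≤ j := by
          rcases Nat.eq_zero_or_pos j with rfl | h
          · exact absurd rfl (by exact_mod_cast hj'.1)
          · exact h
        have hi2 : i ≤ n + 1 := by
          have := hi'.2; simp only [Int.natAbs_natCast, hhalf] at this; omega
        have hj2 : j ≤ n + 1 := by
          have := hj'.2; simp only [Int.natAbs_natCast, hhalf] at this; omega
        rcases Nat.lt_or_ge i (n + 1) with hilt | hige
        · rcases Nat.lt_or_ge j (n + 1) with hjlt | hjge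
          · -- both ≤ n : old witnesses
            have hik : (i : ℤ) ∈ colourSet k :=
              (mem_colourSet_odd hnek).2 (by simp; omega)
            have hjk : (j : ℤ) ∈ colourSet k :=
              (mem_colourSet_odd hnek).2 (by simp; omega)
            exact ⟨(hpair i j hik hjk hne).1.transfer hSsub hφ'pos hi1 hj1,
              (hpair i j hik hjk hne).2.transfer hSsub hφ'pos hi1 hj1⟩
          · -- j = n+1
            have hj'' : j = n + 1 := by omega
            subst hj''
            have := key i hi1 (by omega)
            exact ⟨(this.1).symm hsymm, (this.2).symm hsymm⟩
        · -- i = n+1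
          have hi'' : i = n + 1 := by omega
          subst hi''
          exact key j hj1 (by omega)
      · -- loops
        intro i h1 hi
        have hi' := (mem_colourSet_even hkeven).1 hi
        have hi2 : i ≤ n + 1 := by
          have := hi'.2; simp only [Int.natAbs_natCast, hhalf] at this; omega
        rcases Nat.lt_or_ge i (n + 1) with hilt | hige
        · have hik : (i : ℤ) ∈ colourSet k :=
            (mem_colourSet_odd hnek).2 (by simp; omega)
          exact (hloop i h1 hik).transfer hSsub hφ'pos h1 h1
        · have : i = n + 1 := by omega
          subst this
          exact keyloop

lemma extend_finset {G : SimpleGraph V} {σ' : V → V → ℤ} (hσ' : IsSignature σ')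
    (F : Finset V) {k : ℕ} {S : Set V} {φ : V → ℤ}
    (h : CompleteOn G σ' k S φ) :
    ∃ k' φ', k ≤ k' ∧ CompleteOn G σ' k' (S ∪ ↑F) φ' := by
  classical
  induction F using Finset.induction_on with
  | empty => exact ⟨k, φ, le_refl _, by simpa using h⟩
  | @insert a F' ha ih =>
    obtain ⟨k1, φ1, hk1, h1⟩ := ih
    by_cases hmem : a ∈ S ∪ ↑F'
    · refine ⟨k1, φ1, hk1, ?_⟩
      rwa [Finset.coe_insert, Set.union_insert, Set.insert_eq_self.2 hmem]
    · obtain ⟨k2, φ2, hk2, h2⟩ := extend_step hσ' hmem h1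
      refine ⟨k2, φ2, hk1.trans hk2, ?_⟩
      rwa [Finset.coe_insert, Set.union_insert]

lemma isCompleteColouring_of_completeOn {G : SimpleGraph V} {σ' : V → V → ℤ} {k : ℕ}
    {φ : V → ℤ} (h : CompleteOn G σ' k Set.univ φ) : IsCompleteColouring G σ' k φ := by
  obtain ⟨h1, h2, h3, h4⟩ := h
  refine ⟨⟨fun v => h1 v trivial, fun u v ha => h2 u trivial v trivial ha⟩,
    fun i j hi hj hne => ?_, fun i hi1 hi => ?_⟩
  · obtain ⟨⟨u, _, w, _, hh⟩, ⟨u', _, w', _, hh'⟩⟩ := h3 i j hi hj hne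
    exact ⟨⟨u, w, hh⟩, ⟨u', w', hh'⟩⟩
  · obtain ⟨u, _, w, _, hh⟩ := h4 i hi1 hi
    exact ⟨u, w, hh⟩

/-- transfer a complete colouring of an induced subgraph to the whole graph
(possibly increasing the number of colours). -/
lemma lift_admits [Fintype V] {G : SimpleGraph V} {σ : V → V → ℤ} (hσ : IsSignature σ)
    (S : Set V) {m : ℕ}
    (h : AdmitsComplete (G.induce S) (fun a b => σ a.1 b.1) m) :
    ∃ m', m ≤ m' ∧ AdmitsComplete G σ m' := by
  classical
  obtain ⟨τ, ⟨hτs, hτv⟩, ⟨s0, hs0v, hs0e⟩, ψ, ⟨⟨hψc, hψp⟩, hψpair, hψloop⟩⟩ := h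
  set s' : V → ℤ := fun v => if h : v ∈ S then s0 ⟨v, h⟩ else 1 with hs'def
  set σ3 : V → V → ℤ := fun u v => s' u * s' v * σ u v with hσ3def
  set φ0 : V → ℤ := fun v => if h : v ∈ S then ψ ⟨v, h⟩ else 0 with hφ0def
  have hs'v : ∀ v, s' v = 1 ∨ s' v = -1 := by
    intro v
    by_cases hv : v ∈ S
    · simp only [hs'def, dif_pos hv]; exact hs0v _
    · simp [hs'def, hv]
  have hσ3sig : IsSignature σ3 := by
    constructor
    · intro u v; simp only [hσ3def]; rw [hσ.1 u v]; ring
    · intro u v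
      rcases hs'v u with e | e <;> rcases hs'v v with f | f <;>
        rcases hσ.2 u v with g | g <;> simp [hσ3def, e, f, g]
  have hσ3S : ∀ (a b : S), σ3 a.1 b.1 = τ a b := by
    intro a b
    rw [hs0e a b]
    simp only [hσ3def, hs'def, dif_pos a.2, dif_pos b.2]
  have hφ0S : ∀ (a : S), φ0 a.1 = ψ a := by
    intro a; simp only [hφ0def, dif_pos a.2]
  have hC : CompleteOn G σ3 m S φ0 := by
    refine ⟨?_, ?_, ?_, ?_⟩
    · intro x hx; rw [show φ0 x = ψ ⟨x, hx⟩ from hφ0S ⟨x, hx⟩]; exact hψc _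
    · intro u hu w hw hadj
      have := hψp ⟨u, hu⟩ ⟨w, hw⟩ hadj
      rwa [← hσ3S ⟨u, hu⟩ ⟨w, hw⟩, ← hφ0S ⟨u, hu⟩, ← hφ0S ⟨w, hw⟩] at this
    · intro i j hi hj hne
      obtain ⟨⟨a, b, h1, h2, h3, h4⟩, ⟨a', b', h1', h2', h3', h4'⟩⟩ := hψpair i j hi hj hne
      constructor
      · refine ⟨a.1, a.2, b.1, b.2, h1, ?_, ?_, ?_⟩
        · rw [hφ0S a]; exact h2
        · rw [hφ0S b]; exact h3
        · unfold redSign at h4 ⊢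
          rw [hφ0S a, hφ0S b, hσ3S a b]; exact h4
      · refine ⟨a'.1, a'.2, b'.1, b'.2, h1', ?_, ?_, ?_⟩
        · rw [hφ0S a']; exact h2'
        · rw [hφ0S b']; exact h3'
        · unfold redSign at h4' ⊢
          rw [hφ0S a', hφ0S b', hσ3S a' b']; exact h4'
    · intro i hi1 hi
      obtain ⟨a, b, h1, h2, h3, h4⟩ := hψloop i hi1 hi
      refine ⟨a.1, a.2, b.1, b.2, h1, ?_, ?_, ?_⟩
      · rw [hφ0S a]; exact h2
      · rw [hφ0S b]; exact h3
      · unfold redSign at h4 ⊢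
        rw [hφ0S a, hφ0S b, hσ3S a b]; exact h4
  obtain ⟨m', φ', hm', hC'⟩ := extend_finset hσ3sig Finset.univ hC
  have huniv : (S ∪ ↑(Finset.univ : Finset V)) = Set.univ := by simp
  rw [huniv] at hC'
  exact ⟨m', hm', σ3, hσ3sig, ⟨s', hs'v, fun u v => rfl⟩, φ',
    isCompleteColouring_of_completeOn hC'⟩

/-- restrict a complete colouring to the set of witnesses. -/
lemma restrict_admits {G : SimpleGraph V} {σ σ' : V → V → ℤ}
    (hσ' : IsSignature σ') (hsw : SwitchEquiv σ σ') {k : ℕ} {S : Set V} {φ : V → ℤ}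
    (hC : CompleteOn G σ' k S φ) :
    AdmitsComplete (G.induce S) (fun a b => σ a.1 b.1) k := by
  obtain ⟨hcol, hprop, hpair, hloop⟩ := hC
  obtain ⟨s, hsv, hse⟩ := hsw
  refine ⟨fun a b => σ' a.1 b.1, ⟨fun a b => hσ'.1 a.1 b.1, fun a b => hσ'.2 a.1 b.1⟩,
    ⟨fun a => s a.1, fun a => hsv a.1, fun a b => hse a.1 b.1⟩,
    fun a => φ a.1, ⟨⟨fun a => hcol a.1 a.2, fun a b hab => hprop a.1 a.2 b.1 b.2 hab⟩,
    fun i j hi hj hne => ?_, fun i hi1 hi => ?_⟩⟩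
  · obtain ⟨⟨u, hu, w, hw, h1, h2, h3, h4⟩, ⟨u', hu', w', hw', h1', h2', h3', h4'⟩⟩ :=
      hpair i j hi hj hne
    exact ⟨⟨⟨u, hu⟩, ⟨w, hw⟩, h1, h2, h3, h4⟩, ⟨⟨u', hu'⟩, ⟨w', hw'⟩, h1', h2', h3', h4'⟩⟩
  · obtain ⟨u, hu, w, hw, h1, h2, h3, h4⟩ := hloop i hi1 hi
    exact ⟨⟨u, hu⟩, ⟨w, hw⟩, h1, h2, h3, h4⟩

/-- the number of colours of a complete colouring is bounded by the number of vertices. -/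
lemma admits_le [Fintype V] {G : SimpleGraph V} {σ : V → V → ℤ} {m : ℕ}
    (h : AdmitsComplete G σ m) : m ≤ 2 * Fintype.card V + 1 := by
  classical
  obtain ⟨σ', _, _, φ, ⟨_, _, hloop⟩⟩ := h
  by_cases hm : m ≤ 1
  · omega
  · have hhalf : 1 ≤ m / 2 := by omega
    have hmem : ∀ i : ℕ, 1 ≤ i → i ≤ m / 2 → (i : ℤ) ∈ colourSet m := by
      intro i h1 h2
      by_cases he : Even m
      · exact (mem_colourSet_even he).2 ⟨by exact_mod_cast (by omega : i ≠ 0), by simpa⟩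
      · exact (mem_colourSet_odd he).2 (by simpa)
    have hw : ∀ i : ℕ, 1 ≤ i → i ≤ m / 2 → ∃ u : V, (φ u).natAbs = i := by
      intro i h1 h2
      obtain ⟨u, w, _, h2', _⟩ := hloop i h1 (hmem i h1 h2)
      exact ⟨u, h2'⟩
    set f : ℕ → V := fun i => if h : ∃ u : V, (φ u).natAbs = i then h.choose else
      (hw 1 le_rfl hhalf).choose with hfdef
    have hf : ∀ i ∈ Finset.Icc 1 (m / 2), (φ (f i)).natAbs = i := by
      intro i hi
      rw [Finset.mem_Icc] at hi
      have hex := hw i hi.1 hi.2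
      simp only [hfdef, dif_pos hex]
      exact hex.choose_spec
    have hinj : Set.InjOn f ↑(Finset.Icc 1 (m / 2)) := by
      intro a ha b hb hab
      rw [← hf a ha, ← hf b hb, hab]
    have := Finset.card_le_card_of_injOn f (fun a _ => Finset.mem_univ (f a)) hinj
    simp only [Nat.card_Icc, Finset.card_univ] at this
    omega

end S15

namespace S15
variable {V : Type*}

lemma witness_set {G : SimpleGraph V} {σ' : V → V → ℤ} {k : ℕ} (hk : 1 ≤ k) {φ : V → ℤ}
    (h : IsCompleteColouring G σ' k φ) :
    ∃ S : Set V, CompleteOn G σ' k S φ ∧ S.ncard ≤ (k + 1) ^ 2 := by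
  classical
  obtain ⟨⟨hcol, hprop⟩, hpair, hloop⟩ := h
  by_cases hV : Nonempty V
  case neg =>
    refine ⟨∅, ⟨by simp, by simp, fun i j hi hj hne => ?_, fun i hi1 hi => ?_⟩, by simp⟩
    · obtain ⟨u, -⟩ := (hpair i j hi hj hne).1
      exact absurd ⟨u⟩ hV
    · obtain ⟨u, -⟩ := hloop i hi1 hi
      exact absurd ⟨u⟩ hV
  case pos =>
  obtain ⟨d⟩ := hV
  set w : ℕ → ℕ → ℤ → V × V := fun i j s =>
    if h : HasEdgeType G σ' φ i j s then (h.choose, h.choose_spec.choose) else (d, d) with hwdef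
  have hwspec : ∀ i j : ℕ, ∀ s : ℤ, HasEdgeType G σ' φ i j s →
      G.Adj (w i j s).1 (w i j s).2 ∧ (φ (w i j s).1).natAbs = i ∧
      (φ (w i j s).2).natAbs = j ∧ redSign σ' φ (w i j s).1 (w i j s).2 = s := by
    intro i j s hh
    simp only [hwdef, dif_pos hh]
    exact hh.choose_spec.choose_spec
  set n := k / 2 with hndef
  set T : Finset ℕ := (Finset.range (n + 1)).filter (fun i => (i : ℤ) ∈ colourSet k) with hTdef
  have hmemT : ∀ i : ℕ, (i : ℤ) ∈ colourSet k → i ∈ T := by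
    intro i hi
    simp only [hTdef, Finset.mem_filter, Finset.mem_range]
    refine ⟨?_, hi⟩
    have := natAbs_le_of_mem hi
    simp only [Int.natAbs_natCast] at this
    omega
  set B : ℕ → Finset V := fun i =>
    ((T.erase i).biUnion fun j =>
      {(w i j 1).1, (w i j (-1)).1, (w j i 1).2, (w j i (-1)).2}) ∪
      {(w i i (-1)).1, (w i i (-1)).2} with hBdef
  set Sf : Finset V := T.biUnion B with hSdef
  refine ⟨↑Sf, ⟨fun x _ => hcol x, fun u _ v _ hadj => hprop u v hadj,
    fun i j hi hj hne => ?_, fun i hi1 hi => ?_⟩, ?_⟩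
  · -- pair witnesses are inside Sf
    have hTi := hmemT i hi
    have hTj := hmemT j hj
    constructor
    · have spec := hwspec i j 1 ((hpair i j hi hj hne).1)
      refine ⟨(w i j 1).1, ?_, (w i j 1).2, ?_, spec.1, spec.2.1, spec.2.2.1, spec.2.2.2⟩
      · refine Finset.mem_coe.2 (Finset.mem_biUnion.2 ⟨i, hTi, Finset.mem_union_left _
          (Finset.mem_biUnion.2 ⟨j, Finset.mem_erase.2 ⟨hne.symm, hTj⟩, by simp⟩)⟩)
      · refine Finset.mem_coe.2 (Finset.mem_biUnion.2 ⟨j, hTj, Finset.mem_union_left _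
          (Finset.mem_biUnion.2 ⟨i, Finset.mem_erase.2 ⟨hne, hTi⟩, by simp⟩)⟩)
    · have spec := hwspec i j (-1) ((hpair i j hi hj hne).2)
      refine ⟨(w i j (-1)).1, ?_, (w i j (-1)).2, ?_, spec.1, spec.2.1, spec.2.2.1, spec.2.2.2⟩
      · refine Finset.mem_coe.2 (Finset.mem_biUnion.2 ⟨i, hTi, Finset.mem_union_left _
          (Finset.mem_biUnion.2 ⟨j, Finset.mem_erase.2 ⟨hne.symm, hTj⟩, by simp⟩)⟩)
      · refine Finset.mem_coe.2 (Finset.mem_biUnion.2 ⟨j, hTj, Finset.mem_union_left _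
          (Finset.mem_biUnion.2 ⟨i, Finset.mem_erase.2 ⟨hne, hTi⟩, by simp⟩)⟩)
  · -- loop witnesses
    have hTi := hmemT i hi
    have spec := hwspec i i (-1) (hloop i hi1 hi)
    refine ⟨(w i i (-1)).1, ?_, (w i i (-1)).2, ?_, spec.1, spec.2.1, spec.2.2.1, spec.2.2.2⟩
    · exact Finset.mem_coe.2 (Finset.mem_biUnion.2 ⟨i, hTi,
        Finset.mem_union_right _ (by simp)⟩)
    · exact Finset.mem_coe.2 (Finset.mem_biUnion.2 ⟨i, hTi,
        Finset.mem_union_right _ (by simp)⟩)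
  · -- counting
    rw [Set.ncard_coe_finset]
    set m := T.card with hmdef
    have h4 : ∀ a b c d : V, ({a, b, c, d} : Finset V).card ≤ 4 := by
      intro a b c d
      have h1 := Finset.card_insert_le a ({b, c, d} : Finset V)
      have h2 := Finset.card_insert_le b ({c, d} : Finset V)
      have h3 := Finset.card_insert_le c ({d} : Finset V)
      simp only [Finset.card_singleton] at h3
      omega
    have hBcard : ∀ i ∈ T, (B i).card ≤ 4 * m := by
      intro i hiT
      have h1 : ((T.erase i).biUnion fun j =>
          ({(w i j 1).1, (w i j (-1)).1, (w j i 1).2, (w j i (-1)).2} : Finset V)).card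
          ≤ (T.erase i).card * 4 := by
        refine le_trans (Finset.card_biUnion_le) ?_
        refine le_trans (Finset.sum_le_sum fun j _ => h4 _ _ _ _) ?_
        simp [Finset.sum_const, mul_comm]
      have h2 : ({(w i i (-1)).1, (w i i (-1)).2} : Finset V).card ≤ 2 := by
        have := Finset.card_insert_le (w i i (-1)).1 ({(w i i (-1)).2} : Finset V)
        simp only [Finset.card_singleton] at this
        omega
      have h3 := Finset.card_union_le
        ((T.erase i).biUnion fun j =>
          ({(w i j 1).1, (w i j (-1)).1, (w j i 1).2, (w j i (-1)).2} : Finset V))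
        ({(w i i (-1)).1, (w i i (-1)).2} : Finset V)
      have h5 : (T.erase i).card = m - 1 := by rw [Finset.card_erase_of_mem hiT]
      have hm1 : 1 ≤ m := Finset.card_pos.2 ⟨i, hiT⟩
      simp only [hBdef]
      omega
    have hScard : Sf.card ≤ m * (4 * m) := by
      refine le_trans Finset.card_biUnion_le ?_
      refine le_trans (Finset.sum_le_sum hBcard) ?_
      simp [Finset.sum_const, hmdef]
    have h2m : 2 * m ≤ k + 1 := by
      have hsub : T ⊆ Finset.range (n + 1) := Finset.filter_subset _ _
      rcases Nat.even_or_odd k with hke | hko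
      · -- even : 0 ∉ T
        have h0 : 0 ∉ T := by
          simp only [hTdef, Finset.mem_filter]
          rintro ⟨-, h0'⟩
          exact ((mem_colourSet_even hke).1 h0').1 rfl
        have : T ⊆ (Finset.range (n + 1)).erase 0 :=
          Finset.subset_erase.2 ⟨hsub, h0⟩
        have hcard := Finset.card_le_card this
        rw [Finset.card_erase_of_mem (Finset.mem_range.2 (by omega)),
          Finset.card_range] at hcard
        obtain ⟨p, hp⟩ := hke
        omega
      · have hcard := Finset.card_le_card hsub
        rw [Finset.card_range] at hcard
        obtain ⟨p, hp⟩ := hko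
        omega
    calc Sf.card ≤ m * (4 * m) := hScard
      _ ≤ (2 * m) * (2 * m) := by ring_nf; omega
      _ ≤ (k + 1) * (k + 1) := Nat.mul_le_mul h2m h2m
      _ = (k + 1) ^ 2 := (sq (k + 1)).symm

end S15


/-- For every `k ≥ 1`, every signed graph with `ψ(G,σ) = k` has an induced
signed subgraph with achromatic number `k` on at most `(k+1)²` vertices. -/
theorem statement15 (k : ℕ) (hk : 1 ≤ k) {V : Type*} [Fintype V]
    (G : SimpleGraph V) (σ : V → V → ℤ) (hσ : IsSignature σ) (hpsi : psi G σ = k) :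
    ∃ s : Set V, psi (G.induce s) (fun a b => σ a.1 b.1) = k ∧
      s.ncard ≤ (k + 1) ^ 2 := by
  classical
  have hbdd : BddAbove {m | AdmitsComplete G σ m} :=
    ⟨2 * Fintype.card V + 1, fun m hm => S15.admits_le hm⟩
  have hne : {m | AdmitsComplete G σ m}.Nonempty := by
    by_contra hh
    rw [Set.not_nonempty_iff_eq_empty] at hh
    simp only [psi, hh, csSup_empty] at hpsi
    simp at hpsi
    omega
  have hkmem : AdmitsComplete G σ k := by
    have := Nat.sSup_mem hne hbdd
    rwa [show sSup {m | AdmitsComplete G σ m} = k from hpsi] at this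
  obtain ⟨σ', hsig', hsw', φ, hφ⟩ := hkmem
  obtain ⟨S, hCS, hcard⟩ := S15.witness_set hk hφ
  refine ⟨S, ?_, hcard⟩
  have hlow : AdmitsComplete (G.induce S) (fun a b => σ a.1 b.1) k :=
    S15.restrict_admits hsig' hsw' hCS
  have hup : ∀ m, AdmitsComplete (G.induce S) (fun a b => σ a.1 b.1) m → m ≤ k := by
    intro m hm
    obtain ⟨m', hmm', hm'⟩ := S15.lift_admits hσ S hm
    have hle : m' ≤ sSup {m | AdmitsComplete G σ m} := le_csSup hbdd hm'
    rw [show sSup {m | AdmitsComplete G σ m} = k from hpsi] at hle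
    omega
  show sSup {m | AdmitsComplete (G.induce S) (fun a b => σ a.1 b.1) m} = k
  apply le_antisymm
  · exact csSup_le ⟨k, hlow⟩ (fun m hm => hup m hm)
  · exact le_csSup ⟨k, fun m hm => hup m hm⟩ hlow
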